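/- arXiv:math/0311094 — 3 statements merged into one kernel-verified Lean document; each statement's English description precedes it below -/
import Mathlib

section
/- For a Schwartz function w on ℝ, ‖ŵ‖_{L^1} ≤ C ‖w‖_{L^2}^{1/2} ‖∂_x w‖_{L^2}^{1/2}, where ŵ is the Fourier transform of w and C is an absolute constant. -/
open MeasureTheory FourierTransform Real Complex InnerProductSpace
open scoped ENNReal NNReal

namespace CarlsonAux


lemma schwartz_bound (f : SchwartzMap ℝ ℂ) : ∃ C, ∀ x, ‖f x‖ ≤ C := by
  obtain ⟨C, -, hC⟩ := f.decay 0 0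
  exact ⟨C, fun x => by simpa using hC x⟩

lemma sq_integrable (f : SchwartzMap ℝ ℂ) : Integrable (fun x => ‖f x‖ ^ 2) volume := by
  obtain ⟨C, hC⟩ := schwartz_bound f
  refine ((f.integrable (μ := volume)).norm.const_mul C).mono'
    ((f.continuous.norm.pow 2).aestronglyMeasurable) (ae_of_all _ fun x => ?_)
  have h0 : (0:ℝ) ≤ ‖f x‖ := norm_nonneg _
  have := hC x
  rw [Real.norm_of_nonneg (by positivity)]
  nlinarith

lemma memL2 (f : SchwartzMap ℝ ℂ) : MemLp (⇑f) 2 volume :=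
  (memLp_two_iff_integrable_sq_norm f.continuous.aestronglyMeasurable).2 (sq_integrable f)

/-- multiplication formula -/
lemma mult_formula {u v : ℝ → ℂ} (hu : Integrable u volume) (hv : Integrable v volume) :
    ∫ ξ, 𝓕 u ξ * v ξ = ∫ x, u x * 𝓕 v x := by
  have h := VectorFourier.integral_fourierIntegral_smul_eq_flip (L := innerₗ ℝ)
    (μ := volume) (ν := volume) Real.continuous_fourierChar
    (by exact continuous_inner) hu hv
  have hflip : (innerₗ ℝ).flip = innerₗ ℝ := by
    apply LinearMap.ext; intro x; apply LinearMap.ext; intro y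
    simp [real_inner_comm]
  rw [hflip] at h
  simp only [smul_eq_mul] at h; exact h

lemma fourier_conj_neg (f : SchwartzMap ℝ ℂ) :
    𝓕 (fun x => (starRingEnd ℂ) (f (-x))) = fun ξ => (starRingEnd ℂ) (𝓕 (⇑f) ξ) := by
  ext ξ
  rw [Real.fourier_eq', Real.fourier_eq', ← integral_conj]
  rw [show (∫ v : ℝ, Complex.exp (↑(-2 * π * ⟪v, ξ⟫_ℝ) * Complex.I) •
      (starRingEnd ℂ) (f (-v))) = ∫ v : ℝ, Complex.exp (↑(-2 * π * ⟪-v, ξ⟫_ℝ) * Complex.I) •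
      (starRingEnd ℂ) (f (-(-v))) from by
    simpa [abs_inv, abs_neg, abs_one, inv_one] using (MeasureTheory.Measure.integral_comp_mul_left
      (fun v : ℝ => Complex.exp (↑(-2 * π * ⟪-v, ξ⟫_ℝ) * Complex.I) •
        (starRingEnd ℂ) (f (-(-v)))) (-1))]
  congr 1
  ext v
  simp only [neg_neg, smul_eq_mul, map_mul, RCLike.inner_apply, conj_trivial]
  rw [← Complex.exp_conj]
  simp only [map_mul, Complex.conj_ofReal, Complex.conj_I]
  push_cast
  ring_nf

lemma fourierSchwartz_coe (f : SchwartzMap ℝ ℂ) :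
    ⇑(SchwartzMap.fourierTransformCLM ℂ f) = 𝓕 (⇑f) := rfl

lemma plancherel (f : SchwartzMap ℝ ℂ) :
    ∫ ξ : ℝ, ‖𝓕 (⇑f) ξ‖ ^ 2 = ∫ x : ℝ, ‖f x‖ ^ 2 := by
  set F : ℝ → ℂ := 𝓕 (⇑f) with hF
  have hFs : ⇑(SchwartzMap.fourierTransformCLM ℂ f) = F := rfl
  have hFint : Integrable F volume := by
    rw [← hFs]; exact (SchwartzMap.fourierTransformCLM ℂ f).integrable
  have hFcont : Continuous F := by rw [← hFs]; exact (SchwartzMap.fourierTransformCLM ℂ f).continuous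
  set g : ℝ → ℂ := fun x => (starRingEnd ℂ) (f (-x)) with hg
  have hgcont : Continuous g := Complex.continuous_conj.comp (f.continuous.comp continuous_neg)
  have hgint : Integrable g volume := by
    have h1 : Integrable (fun x : ℝ => f (-x)) volume := f.integrable.comp_neg
    exact ⟨Complex.continuous_conj.comp_aestronglyMeasurable h1.1,
      h1.2.congr' (ae_of_all _ fun x => by simp [hg])⟩
  have hg𝓕 : 𝓕 g = fun ξ => (starRingEnd ℂ) (F ξ) := fourier_conj_neg f
  have hg𝓕int : Integrable (𝓕 g) volume := by
    rw [hg𝓕]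
    exact ⟨Complex.continuous_conj.comp_aestronglyMeasurable hFint.1,
      hFint.2.congr' (ae_of_all _ fun x => (Complex.norm_conj (F x)).symm)⟩
  have hinv : ∀ x, 𝓕 (𝓕 g) x = g (-x) := by
    intro x
    have h := hgcont.fourierInv_fourier_eq hgint hg𝓕int
    rw [show 𝓕 (𝓕 g) x = 𝓕⁻ (𝓕 g) (-x) from by
      rw [Real.fourierInv_eq_fourier_neg, neg_neg]]
    rw [h]
  have key : (↑(∫ ξ : ℝ, ‖F ξ‖ ^ 2) : ℂ) = ↑(∫ x : ℝ, ‖f x‖ ^ 2) := by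
    calc (↑(∫ ξ : ℝ, ‖F ξ‖ ^ 2) : ℂ)
        = ∫ ξ : ℝ, ((‖F ξ‖ ^ 2 : ℝ) : ℂ) :=
          (integral_ofReal (𝕜 := ℂ) (f := fun ξ => ‖F ξ‖ ^ 2)).symm
      _ = ∫ ξ : ℝ, (‖F ξ‖ : ℂ) ^ 2 := by push_cast; rfl
      _ = ∫ ξ : ℝ, F ξ * (starRingEnd ℂ) (F ξ) := by
          congr 1; ext ξ
          rw [Complex.mul_conj, Complex.normSq_eq_norm_sq]
          push_cast
          rfl
      _ = ∫ ξ : ℝ, 𝓕 (⇑f) ξ * 𝓕 g ξ := by rw [hg𝓕]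
      _ = ∫ x : ℝ, f x * 𝓕 (𝓕 g) x := mult_formula f.integrable hg𝓕int
      _ = ∫ x : ℝ, f x * (starRingEnd ℂ) (f x) := by
          congr 1; ext x; rw [hinv x]; simp [hg]
      _ = ∫ x : ℝ, ((‖f x‖ ^ 2 : ℝ) : ℂ) := by
          congr 1; ext x
          rw [Complex.mul_conj, Complex.normSq_eq_norm_sq]
      _ = ↑(∫ x : ℝ, ‖f x‖ ^ 2) := integral_ofReal (𝕜 := ℂ) (f := fun x => ‖f x‖ ^ 2)
  exact_mod_cast key

lemma A_pos (f : SchwartzMap ℝ ℂ) (hf : ⇑f ≠ 0) : 0 < ∫ x : ℝ, ‖f x‖ ^ 2 := by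
  rcases (integral_nonneg (f := fun x : ℝ => ‖f x‖ ^ 2) (fun x => sq_nonneg _)).lt_or_eq with h | h
  · exact h
  · exfalso
    have h0 : (fun x : ℝ => ‖f x‖ ^ 2) =ᵐ[volume] 0 :=
      (integral_eq_zero_iff_of_nonneg (f := fun x : ℝ => ‖f x‖ ^ 2) (fun x => sq_nonneg _) (sq_integrable f)).1 h.symm
    have : (fun x : ℝ => ‖f x‖ ^ 2) = 0 :=
      ((f.continuous.norm.pow 2).ae_eq_iff_eq volume continuous_const).1 h0
    apply hf
    funext x
    have := congrFun this x
    simpa using this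

lemma B_pos (f : SchwartzMap ℝ ℂ) (hf : ⇑f ≠ 0) : 0 < ∫ x : ℝ, ‖deriv (⇑f) x‖ ^ 2 := by
  have hdc : ⇑(SchwartzMap.derivCLM ℝ ℂ f) = deriv ⇑f := funext fun x => SchwartzMap.derivCLM_apply ℝ f x
  have : (⇑(SchwartzMap.derivCLM ℝ ℂ f) : ℝ → ℂ) ≠ 0 := by
    intro h
    rw [hdc] at h
    have hconst : ∀ x : ℝ, f x = f 0 := fun x =>
      is_const_of_deriv_eq_zero f.differentiable (fun y => congrFun h y) x 0
    have : Integrable (fun _ : ℝ => f 0) volume := f.integrable.congr (ae_of_all _ hconst)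
    rcases integrable_const_iff.1 this with h0 | h0
    · exact hf (funext fun x => by simp [hconst x, h0])
    · exact absurd h0.measure_univ_lt_top (by simp)
  have := A_pos (SchwartzMap.derivCLM ℝ ℂ f) this
  rwa [hdc] at this

lemma final_ineq {A B : ℝ} (hA : 0 < A) (hB : 0 < B) :
    (Real.sqrt (B / (4 * π ^ 2)) / Real.sqrt A * π) ^ (1/2 : ℝ) * (2 * A) ^ (1/2 : ℝ) ≤
      2 * Real.sqrt (Real.sqrt A) * Real.sqrt (Real.sqrt B) := by
  have hπ := Real.pi_pos
  set a := Real.sqrt (B / (4 * π ^ 2)) / Real.sqrt A with ha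
  have hapos : 0 < a := div_pos (Real.sqrt_pos.2 (by positivity)) (Real.sqrt_pos.2 hA)
  rw [← Real.sqrt_eq_rpow, ← Real.sqrt_eq_rpow, ← Real.sqrt_mul (by positivity)]
  have hsB : Real.sqrt (B / (4 * π ^ 2)) = Real.sqrt B / (2 * π) := by
    rw [show B / (4 * π ^ 2) = B / (2 * π) ^ 2 by ring_nf,
      Real.sqrt_div hB.le, Real.sqrt_sq (by positivity)]
  have h1 : a * π * (2 * A) = Real.sqrt A * Real.sqrt B := by
    rw [ha, hsB]
    rw [show Real.sqrt B / (2 * π) / Real.sqrt A * π * (2 * A)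
        = Real.sqrt B * (A / Real.sqrt A) * (π / π) * (2 / 2) by ring]
    rw [Real.div_sqrt, div_self hπ.ne', div_self (two_ne_zero), mul_one, mul_one, mul_comm]
  rw [h1, Real.sqrt_mul (Real.sqrt_nonneg A)]
  have h2 : (0:ℝ) ≤ Real.sqrt (Real.sqrt A) * Real.sqrt (Real.sqrt B) := by positivity
  nlinarith

lemma eLpNorm_two_eq (f : ℝ → ℂ) (hf : MemLp f 2 volume) :
    eLpNorm f 2 volume = ENNReal.ofReal (Real.sqrt (∫ x : ℝ, ‖f x‖ ^ 2)) := by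
  rw [hf.eLpNorm_eq_integral_rpow_norm two_ne_zero ENNReal.ofNat_ne_top]
  congr 1
  rw [show ((2:ℝ≥0∞).toReal) = (2:ℝ) by simp]
  rw [show (∫ x : ℝ, ‖f x‖ ^ (2:ℝ)) = ∫ x : ℝ, ‖f x‖ ^ 2 from by
    congr 1; ext x; rw [show (2:ℝ) = ((2:ℕ):ℝ) by norm_num, Real.rpow_natCast]]
  rw [Real.sqrt_eq_rpow, one_div]

end CarlsonAux

open CarlsonAux

theorem carlson_beurling :
    ∃ C > 0, ∀ w : SchwartzMap ℝ ℂ,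
      eLpNorm (𝓕 (fun x : ℝ => w x)) 1 volume ≤
        ENNReal.ofReal C * eLpNorm (fun x : ℝ => w x) 2 volume ^ (1 / 2 : ℝ) *
          eLpNorm (fun x : ℝ => deriv (fun y : ℝ => w y) x) 2 volume ^ (1 / 2 : ℝ) := by
  refine ⟨2, by norm_num, fun w => ?_⟩
  by_cases hw : (⇑w : ℝ → ℂ) = 0
  · rw [show (fun x : ℝ => w x) = (0 : ℝ → ℂ) from hw]
    rw [show 𝓕 (0 : ℝ → ℂ) = (0 : ℝ → ℂ) from by
      funext ξ; rw [Real.fourier_eq]; simp]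
    simp
  -- main case
  have hπ := Real.pi_pos
  set A : ℝ := ∫ x : ℝ, ‖w x‖ ^ 2 with hA
  set B : ℝ := ∫ x : ℝ, ‖deriv (⇑w) x‖ ^ 2 with hB
  have hApos : 0 < A := A_pos w hw
  have hBpos : 0 < B := B_pos w hw
  set F : ℝ → ℂ := 𝓕 (⇑w) with hF
  have hFs : ⇑(SchwartzMap.fourierTransformCLM ℂ w) = F := rfl
  have hFcont : Continuous F := by rw [← hFs]; exact (SchwartzMap.fourierTransformCLM ℂ w).continuous
  have iF2 : Integrable (fun ξ : ℝ => ‖F ξ‖ ^ 2) volume := by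
    have := sq_integrable (SchwartzMap.fourierTransformCLM ℂ w)
    rwa [show (fun ξ : ℝ => ‖(SchwartzMap.fourierTransformCLM ℂ w) ξ‖ ^ 2)
      = fun ξ : ℝ => ‖F ξ‖ ^ 2 from rfl] at this
  have hdc : ⇑(SchwartzMap.derivCLM ℝ ℂ w) = deriv ⇑w :=
    funext fun x => SchwartzMap.derivCLM_apply ℝ w x
  have hwdint : Integrable (deriv ⇑w) volume := hdc ▸ (SchwartzMap.derivCLM ℝ ℂ w).integrable
  set G : ℝ → ℂ := 𝓕 (deriv ⇑w) with hG
  have hGeq : G = fun ξ : ℝ => (2 * ↑π * Complex.I * ↑ξ) • F ξ :=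
    Real.fourier_deriv w.integrable w.differentiable hwdint
  have hGnorm : ∀ ξ : ℝ, ‖G ξ‖ ^ 2 = 4 * π ^ 2 * (ξ ^ 2 * ‖F ξ‖ ^ 2) := by
    intro ξ
    rw [hGeq]
    simp only [smul_eq_mul, norm_mul, Complex.norm_real, Complex.norm_I, mul_one,
      Real.norm_eq_abs, abs_of_pos hπ]
    rw [show ‖(2:ℂ)‖ = 2 by norm_num]
    rw [mul_pow, mul_pow, mul_pow, _root_.sq_abs]
    ring
  have hPlF : ∫ ξ : ℝ, ‖F ξ‖ ^ 2 = A := plancherel w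
  have hPlG : ∫ ξ : ℝ, ‖G ξ‖ ^ 2 = B := by
    have := plancherel (SchwartzMap.derivCLM ℝ ℂ w)
    rwa [hdc] at this
  have iG2 : Integrable (fun ξ : ℝ => ‖G ξ‖ ^ 2) volume := by
    have := sq_integrable (SchwartzMap.fourierTransformCLM ℂ (SchwartzMap.derivCLM ℝ ℂ w))
    rwa [show (fun ξ : ℝ => ‖(SchwartzMap.fourierTransformCLM ℂ (SchwartzMap.derivCLM ℝ ℂ w)) ξ‖ ^ 2)
      = fun ξ : ℝ => ‖𝓕 (⇑(SchwartzMap.derivCLM ℝ ℂ w)) ξ‖ ^ 2 from rfl, hdc] at this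
  have hXF2eq : (fun ξ : ℝ => ξ ^ 2 * ‖F ξ‖ ^ 2) = fun ξ : ℝ => ‖G ξ‖ ^ 2 / (4 * π ^ 2) := by
    funext ξ; rw [hGnorm ξ]; field_simp
  have iXF2 : Integrable (fun ξ : ℝ => ξ ^ 2 * ‖F ξ‖ ^ 2) volume := by
    rw [hXF2eq]; exact iG2.div_const _
  have hB' : ∫ ξ : ℝ, ξ ^ 2 * ‖F ξ‖ ^ 2 = B / (4 * π ^ 2) := by
    rw [hXF2eq, integral_div, hPlG]
  set a : ℝ := Real.sqrt (B / (4 * π ^ 2)) / Real.sqrt A with ha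
  have hapos : 0 < a := div_pos (Real.sqrt_pos.2 (by positivity)) (Real.sqrt_pos.2 hApos)
  have ha2 : a ^ 2 = (B / (4 * π ^ 2)) / A := by
    rw [ha, div_pow, Real.sq_sqrt (by positivity), Real.sq_sqrt hApos.le]
  have i1 : Integrable (fun ξ : ℝ => (1 + (ξ / a) ^ 2)⁻¹) volume :=
    integrable_inv_one_add_sq.comp_div hapos.ne'
  have hI1 : ∫ ξ : ℝ, (1 + (ξ / a) ^ 2)⁻¹ = a * π := by
    calc ∫ ξ : ℝ, (1 + (ξ / a) ^ 2)⁻¹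
        = ∫ ξ : ℝ, (fun x : ℝ => (1 + x ^ 2)⁻¹) (ξ * a⁻¹) := by
          simp only [div_eq_mul_inv]
      _ = |a| • ∫ x : ℝ, (1 + x ^ 2)⁻¹ :=
          MeasureTheory.Measure.integral_comp_inv_mul_right (fun x : ℝ => (1 + x ^ 2)⁻¹) a
      _ = a * π := by rw [integral_univ_inv_one_add_sq, abs_of_pos hapos, smul_eq_mul]
  have hsplit : (fun ξ : ℝ => (1 + (ξ / a) ^ 2) * ‖F ξ‖ ^ 2)
      = fun ξ : ℝ => ‖F ξ‖ ^ 2 + (ξ ^ 2 * ‖F ξ‖ ^ 2) / a ^ 2 := by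
    funext ξ; field_simp
  have i2 : Integrable (fun ξ : ℝ => (1 + (ξ / a) ^ 2) * ‖F ξ‖ ^ 2) volume := by
    rw [hsplit]; exact iF2.add (iXF2.div_const _)
  have hI2 : ∫ ξ : ℝ, (1 + (ξ / a) ^ 2) * ‖F ξ‖ ^ 2 = 2 * A := by
    rw [hsplit, integral_add iF2 (iXF2.div_const _), hPlF, integral_div, hB', ha2]
    field_simp
    ring
  -- Cauchy-Schwarz
  set φ : ℝ → ℝ≥0∞ := fun ξ => ENNReal.ofReal (Real.sqrt ((1 + (ξ / a) ^ 2)⁻¹)) with hφ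
  set ψ : ℝ → ℝ≥0∞ := fun ξ => ENNReal.ofReal (Real.sqrt (1 + (ξ / a) ^ 2) * ‖F ξ‖) with hψ
  have hφm : Measurable φ := by
    apply ENNReal.measurable_ofReal.comp
    exact (Real.continuous_sqrt.comp ((continuous_const.add
      ((continuous_id.div_const a).pow 2)).inv₀ (fun x => (add_pos_of_pos_of_nonneg one_pos (sq_nonneg _)).ne'))).measurable
  have hψm : Measurable ψ := by
    apply ENNReal.measurable_ofReal.comp
    exact ((Real.continuous_sqrt.comp (continuous_const.add
      ((continuous_id.div_const a).pow 2))).mul hFcont.norm).measurable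
  have hprod : ∀ ξ : ℝ, φ ξ * ψ ξ = (‖F ξ‖₊ : ℝ≥0∞) := by
    intro ξ
    have h1 : (0:ℝ) < 1 + (ξ / a) ^ 2 := by positivity
    rw [hφ, hψ, ← ENNReal.ofReal_mul (Real.sqrt_nonneg _)]
    rw [show Real.sqrt ((1 + (ξ / a) ^ 2)⁻¹) * (Real.sqrt (1 + (ξ / a) ^ 2) * ‖F ξ‖)
        = Real.sqrt ((1 + (ξ / a) ^ 2)⁻¹ * (1 + (ξ / a) ^ 2)) * ‖F ξ‖ from by
      rw [Real.sqrt_mul (by positivity)]; ring]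
    rw [inv_mul_cancel₀ h1.ne', Real.sqrt_one, one_mul, ofReal_norm_eq_enorm, enorm_eq_nnnorm]
  have hφ2 : ∀ ξ : ℝ, φ ξ ^ (2:ℝ) = ENNReal.ofReal ((1 + (ξ / a) ^ 2)⁻¹) := by
    intro ξ
    show ENNReal.ofReal (Real.sqrt ((1 + (ξ / a) ^ 2)⁻¹)) ^ (2:ℝ) = _
    rw [ENNReal.ofReal_rpow_of_nonneg (Real.sqrt_nonneg _) (by norm_num)]
    congr 1
    rw [show ((2:ℝ)) = ((2:ℕ):ℝ) by norm_num, Real.rpow_natCast, Real.sq_sqrt (by positivity)]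
  have hψ2 : ∀ ξ : ℝ, ψ ξ ^ (2:ℝ) = ENNReal.ofReal ((1 + (ξ / a) ^ 2) * ‖F ξ‖ ^ 2) := by
    intro ξ
    show ENNReal.ofReal (Real.sqrt (1 + (ξ / a) ^ 2) * ‖F ξ‖) ^ (2:ℝ) = _
    rw [ENNReal.ofReal_rpow_of_nonneg (by positivity) (by norm_num)]
    congr 1
    rw [show ((2:ℝ)) = ((2:ℕ):ℝ) by norm_num, Real.rpow_natCast, mul_pow,
      Real.sq_sqrt (by positivity)]
  have key : eLpNorm F 1 volume ≤
      ENNReal.ofReal (a * π) ^ (1/2:ℝ) * ENNReal.ofReal (2 * A) ^ (1/2:ℝ) := by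
    calc eLpNorm F 1 volume = ∫⁻ ξ, (‖F ξ‖₊ : ℝ≥0∞) := eLpNorm_one_eq_lintegral_enorm
      _ = ∫⁻ ξ, (φ * ψ) ξ := by
          exact lintegral_congr fun ξ => (hprod ξ).symm
      _ ≤ (∫⁻ ξ, φ ξ ^ (2:ℝ)) ^ (1/(2:ℝ)) * (∫⁻ ξ, ψ ξ ^ (2:ℝ)) ^ (1/(2:ℝ)) :=
          ENNReal.lintegral_mul_le_Lp_mul_Lq volume Real.HolderConjugate.two_two
            hφm.aemeasurable hψm.aemeasurable
      _ = ENNReal.ofReal (a * π) ^ (1/2:ℝ) * ENNReal.ofReal (2 * A) ^ (1/2:ℝ) := by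
          congr 1
          · congr 1
            rw [lintegral_congr hφ2,
              ← ofReal_integral_eq_lintegral_ofReal i1 (ae_of_all _ fun x => by positivity), hI1]
          · congr 1
            rw [lintegral_congr hψ2,
              ← ofReal_integral_eq_lintegral_ofReal i2 (ae_of_all _ fun x => by positivity), hI2]
  have hrhs : ENNReal.ofReal (2:ℝ) * eLpNorm (fun x : ℝ => w x) 2 volume ^ (1 / 2 : ℝ) *
        eLpNorm (fun x : ℝ => deriv (fun y : ℝ => w y) x) 2 volume ^ (1 / 2 : ℝ)
      = ENNReal.ofReal (2 * Real.sqrt (Real.sqrt A) * Real.sqrt (Real.sqrt B)) := by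
    rw [show (fun x : ℝ => w x) = ⇑w from rfl,
      show (fun x : ℝ => deriv (fun y : ℝ => w y) x) = deriv ⇑w from rfl]
    rw [eLpNorm_two_eq ⇑w (memL2 w),
      eLpNorm_two_eq (deriv ⇑w) (by rw [← hdc]; exact memL2 (SchwartzMap.derivCLM ℝ ℂ w))]
    rw [← hA, ← hB]
    rw [ENNReal.ofReal_rpow_of_nonneg (Real.sqrt_nonneg _) (by norm_num),
      ENNReal.ofReal_rpow_of_nonneg (Real.sqrt_nonneg _) (by norm_num)]
    rw [← Real.sqrt_eq_rpow, ← Real.sqrt_eq_rpow]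
    rw [← ENNReal.ofReal_mul (by norm_num), ← ENNReal.ofReal_mul (by positivity)]
  calc eLpNorm (𝓕 fun x : ℝ => w x) 1 volume
      = eLpNorm F 1 volume := rfl
    _ ≤ ENNReal.ofReal (a * π) ^ (1/2:ℝ) * ENNReal.ofReal (2 * A) ^ (1/2:ℝ) := key
    _ = ENNReal.ofReal ((a * π) ^ (1/2:ℝ) * (2 * A) ^ (1/2:ℝ)) := by
        rw [ENNReal.ofReal_rpow_of_nonneg (by positivity) (by norm_num),
          ENNReal.ofReal_rpow_of_nonneg (by positivity) (by norm_num),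
          ← ENNReal.ofReal_mul (by positivity)]
    _ ≤ ENNReal.ofReal (2 * Real.sqrt (Real.sqrt A) * Real.sqrt (Real.sqrt B)) :=
        ENNReal.ofReal_le_ofReal (final_ineq hApos hBpos)
    _ = ENNReal.ofReal (2:ℝ) * eLpNorm (fun x : ℝ => w x) 2 volume ^ (1 / 2 : ℝ) *
        eLpNorm (fun x : ℝ => deriv (fun y : ℝ => w y) x) 2 volume ^ (1 / 2 : ℝ) := hrhs.symm
end

section
/- Any u₀ ∈ L¹(ℝ, (1+|x|^{N+1})dx) can be decomposed as u₀ = ∑_{j=0}^N ((−1)^j/j!)(∫ x^j u₀ dx) ∂_x^j δ + ∂_x^{N+1} F_{N+1} in the sense of distributions, where F_{N+1} ∈ L¹(ℝ) satisfies ‖F_{N+1}‖_{L¹} ≤ ‖ |x|^{N+1} u₀ ‖_{L¹}. -/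
open MeasureTheory Real Finset

lemma taylor_integral_remainder' (f : ℝ → ℝ) (hf : ContDiff ℝ ((⊤ : ℕ∞) : WithTop ℕ∞) f) (N : ℕ) (x : ℝ) :
    f x = (∑ j ∈ Finset.range (N + 1), x ^ j / (Nat.factorial j : ℝ) * iteratedDeriv j f 0)
      + ∫ t in (0:ℝ)..x, (x - t) ^ N / (Nat.factorial N : ℝ) * iteratedDeriv (N + 1) f t := by
  have hderiv : ∀ t : ℝ, HasDerivAt (fun y => taylorWithinEval f N Set.univ y x)
      ((x - t) ^ N / (Nat.factorial N : ℝ) * iteratedDeriv (N + 1) f t) t := by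
    intro t
    have h := hasDerivWithinAt_taylorWithinEval (f := f) (x := x) (y := t) (n := N)
      (s := Set.univ) (s' := Set.univ) uniqueDiffOn_univ
      (by simp) (Set.mem_univ t) (subset_refl _)
      (hf.of_le (by exact_mod_cast le_top)).contDiffOn ?_
    · rw [hasDerivWithinAt_univ] at h
      refine h.congr_deriv ?_
      rw [iteratedDerivWithin_univ, smul_eq_mul]
      ring
    · rw [iteratedDerivWithin_univ]
      exact ((hf.differentiable_iteratedDeriv N (by exact_mod_cast WithTop.coe_lt_coe.mpr (WithTop.coe_lt_top N))) t).differentiableWithinAt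
  have hcont : Continuous fun t => (x - t) ^ N / (Nat.factorial N : ℝ) * iteratedDeriv (N + 1) f t :=
    (((continuous_const.sub continuous_id).pow N).div_const _).mul
      (hf.continuous_iteratedDeriv (N + 1) (by exact_mod_cast le_top))
  have hftc := intervalIntegral.integral_eq_sub_of_hasDerivAt
    (fun t _ => hderiv t) (hcont.intervalIntegrable 0 x)
  have h1 : taylorWithinEval f N Set.univ x x = f x := taylorWithinEval_self f N Set.univ x
  have h0 : taylorWithinEval f N Set.univ 0 x
      = ∑ j ∈ Finset.range (N + 1), x ^ j / (Nat.factorial j : ℝ) * iteratedDeriv j f 0 := by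
    rw [taylor_within_apply]
    refine Finset.sum_congr rfl fun j _ => ?_
    rw [iteratedDerivWithin_univ, smul_eq_mul]
    ring
  rw [h1, h0] at hftc
  linarith

/-- Duoandikoetxea–Zuazua moment decomposition, stated weakly against Schwartz
test functions: `u₀ = ∑_{j=0}^N ((−1)^j/j!)(∫ x^j u₀) ∂_x^j δ + ∂_x^{N+1} F_{N+1}`,
where `⟨∂_x^j δ, φ⟩ = (−1)^j φ^{(j)}(0)` and
`⟨∂_x^{N+1} F, φ⟩ = (−1)^{N+1} ∫ F φ^{(N+1)}`. -/
theorem moment_decomposition (N : ℕ) (u₀ : ℝ → ℝ)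
    (h : Integrable (fun x => (1 + |x| ^ (N + 1)) * u₀ x)) :
    ∃ F : ℝ → ℝ, Integrable F ∧
      (∫ x : ℝ, |F x|) ≤ (∫ x : ℝ, |x| ^ (N + 1) * |u₀ x|) ∧
      ∀ φ : SchwartzMap ℝ ℝ,
        (∫ x : ℝ, u₀ x * φ x) =
          (∑ j ∈ Finset.range (N + 1),
            ((-1 : ℝ) ^ j / (Nat.factorial j : ℝ)) * (∫ x : ℝ, x ^ j * u₀ x) *
              ((-1 : ℝ) ^ j * iteratedDeriv j (fun y : ℝ => φ y) 0)) +
          (-1 : ℝ) ^ (N + 1) * ∫ x : ℝ, F x * iteratedDeriv (N + 1) (fun y : ℝ => φ y) x := by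
  have hpos : ∀ x : ℝ, (0:ℝ) < 1 + |x| ^ (N + 1) := fun x => by positivity
  have hu : AEStronglyMeasurable u₀ (volume : Measure ℝ) := by
    have heq : u₀ = fun x => (1 + |x| ^ (N + 1))⁻¹ * ((1 + |x| ^ (N + 1)) * u₀ x) :=
      funext fun x => by field_simp
    rw [heq]
    exact (((continuous_const.add (_root_.continuous_abs.pow _)).inv₀
      fun x => (hpos x).ne').aestronglyMeasurable).mul h.aestronglyMeasurable
  -- |x-t| ≤ |x| on uIoc 0 x
  have hxt : ∀ x t : ℝ, t ∈ Set.uIoc 0 x → |x - t| ≤ |x| := by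
    intro x t ht
    rw [Set.uIoc, Set.mem_Ioc] at ht
    rcases le_total 0 x with hx | hx
    · rw [inf_eq_left.mpr hx, sup_eq_right.mpr hx] at ht
      rw [abs_of_nonneg (by linarith [ht.2]), abs_of_nonneg hx]
      linarith [ht.1]
    · rw [inf_eq_right.mpr hx, sup_eq_left.mpr hx] at ht
      rw [abs_of_nonpos (by linarith [ht.1]), abs_of_nonpos hx]
      linarith [ht.2]
  -- moment integrability
  have hmom : Integrable (fun x => |x| ^ (N + 1) * u₀ x) := by
    refine h.abs.mono' (((_root_.continuous_abs.pow _).aestronglyMeasurable).mul hu)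
      (ae_of_all _ fun x => ?_)
    rw [Real.norm_eq_abs, abs_mul, abs_mul, abs_pow, abs_abs, abs_of_pos (hpos x)]
    exact mul_le_mul_of_nonneg_right (by linarith) (abs_nonneg _)
  have habs : Integrable (fun x => |x| ^ (N + 1) * |u₀ x|) := by
    have := hmom.abs
    simpa [abs_mul, abs_pow, abs_abs] using this
  have hxj : ∀ j, j ≤ N + 1 → Integrable (fun x => x ^ j * u₀ x) := by
    intro j hj
    refine h.abs.mono' ((continuous_pow j).aestronglyMeasurable.mul hu)
      (ae_of_all _ fun x => ?_)
    rw [Real.norm_eq_abs, abs_mul, abs_mul, abs_pow, abs_of_pos (hpos x)]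
    refine mul_le_mul_of_nonneg_right ?_ (abs_nonneg _)
    rcases le_total (|x|) 1 with hx1 | hx1
    · have := pow_le_one₀ (abs_nonneg x) hx1 (n := j)
      nlinarith [pow_nonneg (abs_nonneg x) (N + 1)]
    · have := pow_le_pow_right₀ hx1 hj
      linarith
  -- kernel
  set g : ℝ → ℝ → ℝ := fun x t => (if 0 ≤ x then (1:ℝ) else -1) *
      Set.indicator (Set.uIoc 0 x)
        (fun s => u₀ x * (x - s) ^ N / (Nat.factorial N : ℝ)) t with hg_def
  have hS : MeasurableSet {p : ℝ × ℝ | p.2 ∈ Set.uIoc 0 p.1} := by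
    have hset : {p : ℝ × ℝ | p.2 ∈ Set.uIoc 0 p.1}
        = {p : ℝ × ℝ | 0 ⊓ p.1 < p.2} ∩ {p : ℝ × ℝ | p.2 ≤ 0 ⊔ p.1} := by
      ext p; simp [Set.uIoc, Set.mem_Ioc, Set.mem_setOf_eq, Set.mem_inter_iff]
    rw [hset]
    exact (measurableSet_lt (measurable_const.inf measurable_fst) measurable_snd).inter
      (measurableSet_le measurable_snd (measurable_const.sup measurable_fst))
  have hgm : AEStronglyMeasurable (Function.uncurry g) ((volume : Measure ℝ).prod volume) := by
    have h1 : AEStronglyMeasurable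
        (fun p : ℝ × ℝ => u₀ p.1 * (p.1 - p.2) ^ N / (Nat.factorial N : ℝ))
        ((volume : Measure ℝ).prod volume) :=
      ((hu.comp_fst.mul ((continuous_fst.sub continuous_snd).pow N).aestronglyMeasurable).mul
        aestronglyMeasurable_const).congr
        (ae_of_all _ fun p => (div_eq_mul_inv _ _).symm)
    have h2 := h1.indicator hS
    have h3 : AEStronglyMeasurable (fun p : ℝ × ℝ => if 0 ≤ p.1 then (1:ℝ) else -1)
        ((volume : Measure ℝ).prod volume) :=
      (Measurable.ite (measurableSet_le measurable_const measurable_fst)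
        measurable_const measurable_const).aestronglyMeasurable
    refine (h3.mul h2).congr (ae_of_all _ fun p => ?_)
    rw [Function.uncurry_def]
    simp only [Pi.mul_apply, hg_def]
    congr 1
  have hgx_int : ∀ x : ℝ, Integrable (g x) := by
    intro x
    refine Integrable.const_mul ?_ _
    refine (IntegrableOn.integrable_indicator ?_ measurableSet_uIoc)
    rw [Set.uIoc]
    exact ((continuous_const.mul ((continuous_const.sub continuous_id).pow N)).div_const
      _).integrableOn_Ioc
  have hgx_bound : ∀ x : ℝ, (∫ t, |g x t|) ≤ |u₀ x| * |x| ^ (N + 1) / (Nat.factorial N : ℝ) := by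
    intro x
    have hb : ∀ t, |g x t| ≤ Set.indicator (Set.uIoc 0 x)
        (fun _ => |u₀ x| * |x| ^ N / (Nat.factorial N : ℝ)) t := by
      intro t
      by_cases ht : t ∈ Set.uIoc 0 x
      · rw [hg_def]
        simp only [Set.indicator_of_mem ht]
        rw [abs_mul]
        have hsgn : |if 0 ≤ x then (1:ℝ) else -1| = 1 := by split <;> simp
        rw [hsgn, one_mul, abs_div, abs_mul, abs_pow, Nat.abs_cast]
        have h1 : |x - t| ^ N ≤ |x| ^ N := pow_le_pow_left₀ (abs_nonneg _) (hxt x t ht) N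
        have h2 : |u₀ x| * |x - t| ^ N ≤ |u₀ x| * |x| ^ N :=
          mul_le_mul_of_nonneg_left h1 (abs_nonneg _)
        have hfac : (0:ℝ) < (Nat.factorial N : ℝ) := by positivity
        exact (div_le_div_iff_of_pos_right hfac).mpr h2
      · rw [hg_def]
        simp only [Set.indicator_of_notMem ht, mul_zero, abs_zero, le_refl]
    have hind : Integrable (Set.indicator (Set.uIoc 0 x)
        (fun _ => |u₀ x| * |x| ^ N / (Nat.factorial N : ℝ)) : ℝ → ℝ) := by
      refine IntegrableOn.integrable_indicator ?_ measurableSet_uIoc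
      rw [Set.uIoc]
      exact integrableOn_const measure_Ioc_lt_top.ne
    calc (∫ t, |g x t|)
        ≤ ∫ t, Set.indicator (Set.uIoc 0 x)
            (fun _ => |u₀ x| * |x| ^ N / (Nat.factorial N : ℝ)) t :=
          integral_mono (hgx_int x).abs hind hb
      _ = (volume (Set.uIoc 0 x)).toReal • (|u₀ x| * |x| ^ N / (Nat.factorial N : ℝ)) :=
          integral_indicator_const _ measurableSet_uIoc
      _ = |u₀ x| * |x| ^ (N + 1) / (Nat.factorial N : ℝ) := by
          rw [Set.uIoc, Real.volume_Ioc, smul_eq_mul,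
            ENNReal.toReal_ofReal (by simp [sub_nonneg] : (0:ℝ) ≤ 0 ⊔ x - 0 ⊓ x)]
          have : (0:ℝ) ⊔ x - 0 ⊓ x = |x| := by
            rcases le_total 0 x with hx | hx
            · rw [sup_eq_right.mpr hx, inf_eq_left.mpr hx, abs_of_nonneg hx]; ring
            · rw [sup_eq_left.mpr hx, inf_eq_right.mpr hx, abs_of_nonpos hx]; ring
          rw [this, pow_succ]
          ring
  have hfac1 : (1:ℝ) ≤ (Nat.factorial N : ℝ) := by
    exact_mod_cast Nat.one_le_iff_ne_zero.mpr (Nat.factorial_pos N).ne'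
  have hbnd_int : Integrable (fun x => |u₀ x| * |x| ^ (N + 1) / (Nat.factorial N : ℝ)) := by
    refine (habs.div_const (Nat.factorial N : ℝ)).congr (ae_of_all _ fun x => ?_)
    ring
  -- product integrability of g
  have hg_int : Integrable (Function.uncurry g) ((volume : Measure ℝ).prod volume) := by
    rw [MeasureTheory.integrable_prod_iff hgm]
    constructor
    · exact ae_of_all _ fun x => hgx_int x
    · refine hbnd_int.mono' hgm.norm.integral_prod_right' (ae_of_all _ fun x => ?_)
      rw [Real.norm_eq_abs, abs_of_nonneg (integral_nonneg fun t => norm_nonneg _)]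
      calc (∫ t, ‖Function.uncurry g (x, t)‖)
          = ∫ t, |g x t| := by simp [Function.uncurry, Real.norm_eq_abs]
        _ ≤ |u₀ x| * |x| ^ (N + 1) / (Nat.factorial N : ℝ) := hgx_bound x
  set G : ℝ → ℝ := fun t => ∫ x, g x t with hG_def
  have hGint : Integrable G := hg_int.integral_prod_right
  have habs_g : Integrable (fun p : ℝ × ℝ => |Function.uncurry g p|)
      ((volume : Measure ℝ).prod volume) := hg_int.abs
  -- L¹ bound for G
  have hGbound : (∫ t, |G t|) ≤ ∫ x : ℝ, |x| ^ (N + 1) * |u₀ x| := by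
    have hswap : (∫ t, ∫ x, |g x t|) = ∫ x, ∫ t, |g x t| :=
      (MeasureTheory.integral_integral_swap (f := fun x t => |g x t|) habs_g).symm
    have hint_t : Integrable (fun t => ∫ x, |g x t|) := habs_g.integral_prod_right
    have hint_x : Integrable (fun x => ∫ t, |g x t|) := habs_g.integral_prod_left
    calc (∫ t, |G t|) ≤ ∫ t, ∫ x, |g x t| := by
          refine integral_mono hGint.abs hint_t fun t => ?_
          simpa [Real.norm_eq_abs] using
            norm_integral_le_integral_norm (μ := (volume : Measure ℝ)) (fun x => g x t)
      _ = ∫ x, ∫ t, |g x t| := hswap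
      _ ≤ ∫ x, |u₀ x| * |x| ^ (N + 1) / (Nat.factorial N : ℝ) :=
          integral_mono hint_x hbnd_int fun x => hgx_bound x
      _ ≤ ∫ x : ℝ, |x| ^ (N + 1) * |u₀ x| := by
          refine integral_mono hbnd_int habs fun x => ?_
          rw [mul_comm (|u₀ x|)]
          exact div_le_self (by positivity) hfac1
  refine ⟨fun t => (-1:ℝ) ^ (N + 1) * G t, hGint.const_mul _, ?_, ?_⟩
  · calc (∫ t, |(-1:ℝ) ^ (N + 1) * G t|) = ∫ t, |G t| := by
          congr 1; funext t; rw [abs_mul, abs_pow, abs_neg, abs_one, one_pow, one_mul]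
      _ ≤ _ := hGbound
  · intro φ
    have hφsm : ContDiff ℝ ((⊤ : ℕ∞) : WithTop ℕ∞) (fun y : ℝ => φ y) := φ.smooth ⊤
    have hDcont : Continuous (fun t => iteratedDeriv (N + 1) (fun y : ℝ => φ y) t) :=
      hφsm.continuous_iteratedDeriv _ (by exact_mod_cast le_top)
    obtain ⟨C, hCpos, hC⟩ := φ.decay 0 (N + 1)
    have hCb : ∀ t : ℝ, |iteratedDeriv (N + 1) (fun y : ℝ => φ y) t| ≤ C := fun t => by
      have := hC t
      rwa [pow_zero, one_mul, norm_iteratedFDeriv_eq_norm_iteratedDeriv, Real.norm_eq_abs] at this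
    have hC0 : (0:ℝ) ≤ C := le_trans (abs_nonneg _) (hCb 0)
    have hR_eq : ∀ x : ℝ, φ x - (∑ j ∈ Finset.range (N + 1), x ^ j / (Nat.factorial j : ℝ) * iteratedDeriv j (fun y : ℝ => φ y) 0)
        = ∫ t in (0:ℝ)..x, (x - t) ^ N / (Nat.factorial N : ℝ) * iteratedDeriv (N + 1) (fun y : ℝ => φ y) t := by
      intro x
      linarith [taylor_integral_remainder' (fun y : ℝ => φ y) hφsm N x]
    have hRcont : Continuous (fun x : ℝ => φ x - (∑ j ∈ Finset.range (N + 1), x ^ j / (Nat.factorial j : ℝ) * iteratedDeriv j (fun y : ℝ => φ y) 0)) :=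
      φ.continuous.sub (continuous_finset_sum _ fun j _ =>
        ((continuous_pow j).div_const _).mul continuous_const)
    have hRbound : ∀ x : ℝ, |φ x - (∑ j ∈ Finset.range (N + 1), x ^ j / (Nat.factorial j : ℝ) * iteratedDeriv j (fun y : ℝ => φ y) 0)| ≤ C * |x| ^ (N + 1) / (Nat.factorial N : ℝ) := by
      intro x
      rw [hR_eq x]
      have hfacpos : (0:ℝ) < (Nat.factorial N : ℝ) := by positivity
      have hb : ∀ t ∈ Set.uIoc 0 x,
          ‖(x - t) ^ N / (Nat.factorial N : ℝ) * iteratedDeriv (N + 1) (fun y : ℝ => φ y) t‖ ≤ |x| ^ N / (Nat.factorial N : ℝ) * C := by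
        intro t ht
        rw [Real.norm_eq_abs, abs_mul, abs_div, abs_pow, Nat.abs_cast]
        refine mul_le_mul ?_ (hCb t) (abs_nonneg _) (by positivity)
        exact (div_le_div_iff_of_pos_right hfacpos).mpr
          (pow_le_pow_left₀ (abs_nonneg _) (hxt x t ht) N)
      calc |∫ t in (0:ℝ)..x, (x - t) ^ N / (Nat.factorial N : ℝ) * iteratedDeriv (N + 1) (fun y : ℝ => φ y) t|
          ≤ |x| ^ N / (Nat.factorial N : ℝ) * C * |x - 0| :=
            intervalIntegral.norm_integral_le_of_norm_le_const hb
        _ = C * |x| ^ (N + 1) / (Nat.factorial N : ℝ) := by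
            rw [sub_zero, pow_succ]; ring
    have huR : Integrable (fun x => u₀ x * (φ x - (∑ j ∈ Finset.range (N + 1), x ^ j / (Nat.factorial j : ℝ) * iteratedDeriv j (fun y : ℝ => φ y) 0))) := by
      refine (habs.const_mul (C / (Nat.factorial N : ℝ))).mono'
        (hu.mul hRcont.aestronglyMeasurable) (ae_of_all _ fun x => ?_)
      rw [Real.norm_eq_abs, abs_mul]
      calc |u₀ x| * |φ x - (∑ j ∈ Finset.range (N + 1), x ^ j / (Nat.factorial j : ℝ) * iteratedDeriv j (fun y : ℝ => φ y) 0)|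
          ≤ |u₀ x| * (C * |x| ^ (N + 1) / (Nat.factorial N : ℝ)) :=
            mul_le_mul_of_nonneg_left (hRbound x) (abs_nonneg _)
        _ = C / (Nat.factorial N : ℝ) * (|x| ^ (N + 1) * |u₀ x|) := by ring
    have hsum_int : Integrable (fun x => ∑ j ∈ Finset.range (N + 1),
        iteratedDeriv j (fun y : ℝ => φ y) 0 / (Nat.factorial j : ℝ) * (x ^ j * u₀ x)) :=
      integrable_finset_sum _ fun j hj =>
        (hxj j (le_of_lt (Finset.mem_range.mp hj))).const_mul _
    have hsplit : (∫ x : ℝ, u₀ x * φ x) = (∑ j ∈ Finset.range (N + 1),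
        iteratedDeriv j (fun y : ℝ => φ y) 0 / (Nat.factorial j : ℝ) * ∫ x : ℝ, x ^ j * u₀ x)
        + ∫ x : ℝ, u₀ x * (φ x - (∑ j ∈ Finset.range (N + 1), x ^ j / (Nat.factorial j : ℝ) * iteratedDeriv j (fun y : ℝ => φ y) 0)) := by
      have hpt : (fun x : ℝ => u₀ x * φ x) = fun x =>
          (∑ j ∈ Finset.range (N + 1), iteratedDeriv j (fun y : ℝ => φ y) 0 / (Nat.factorial j : ℝ) * (x ^ j * u₀ x))
            + u₀ x * (φ x - (∑ j ∈ Finset.range (N + 1), x ^ j / (Nat.factorial j : ℝ) * iteratedDeriv j (fun y : ℝ => φ y) 0)) := by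
        funext x
        have hs : (∑ j ∈ Finset.range (N + 1), iteratedDeriv j (fun y : ℝ => φ y) 0 / (Nat.factorial j : ℝ) * (x ^ j * u₀ x))
            = u₀ x * (∑ j ∈ Finset.range (N + 1), x ^ j / (Nat.factorial j : ℝ) * iteratedDeriv j (fun y : ℝ => φ y) 0) := by
          rw [Finset.mul_sum]
          exact Finset.sum_congr rfl fun j _ => by ring
        rw [hs]; ring
      rw [hpt, integral_add hsum_int huR,
        integral_finset_sum _ (fun j hj => (hxj j (le_of_lt (Finset.mem_range.mp hj))).const_mul _)]
      congr 1
      exact Finset.sum_congr rfl fun j hj => integral_const_mul _ _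
    have hHint : Integrable (fun p : ℝ × ℝ => Function.uncurry g p * iteratedDeriv (N + 1) (fun y : ℝ => φ y) p.2)
        ((volume : Measure ℝ).prod volume) := by
      have hb := hg_int.bdd_mul ((hDcont.comp continuous_snd).aestronglyMeasurable)
        (c := C) (ae_of_all _ fun p => by simpa [Real.norm_eq_abs] using hCb p.2)
      exact hb.congr (ae_of_all _ fun p => mul_comm _ _)
    have hperx : ∀ x : ℝ, (∫ t : ℝ, g x t * iteratedDeriv (N + 1) (fun y : ℝ => φ y) t) = u₀ x * (φ x - (∑ j ∈ Finset.range (N + 1), x ^ j / (Nat.factorial j : ℝ) * iteratedDeriv j (fun y : ℝ => φ y) 0)) := by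
      intro x
      rw [hR_eq x, intervalIntegral.intervalIntegral_eq_integral_uIoc]
      calc (∫ t : ℝ, g x t * iteratedDeriv (N + 1) (fun y : ℝ => φ y) t)
          = ∫ t : ℝ, (if 0 ≤ x then (1:ℝ) else -1) * Set.indicator (Set.uIoc 0 x)
              (fun s => u₀ x * ((x - s) ^ N / (Nat.factorial N : ℝ) * iteratedDeriv (N + 1) (fun y : ℝ => φ y) s)) t := by
            congr 1; funext t
            by_cases ht : t ∈ Set.uIoc 0 x
            · simp only [hg_def, Set.indicator_of_mem ht]; ring
            · simp only [hg_def, Set.indicator_of_notMem ht]; ring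
        _ = (if 0 ≤ x then (1:ℝ) else -1) * ∫ t : ℝ, Set.indicator (Set.uIoc 0 x)
              (fun s => u₀ x * ((x - s) ^ N / (Nat.factorial N : ℝ) * iteratedDeriv (N + 1) (fun y : ℝ => φ y) s)) t :=
            integral_const_mul _ _
        _ = (if 0 ≤ x then (1:ℝ) else -1) * ∫ t in Set.uIoc 0 x,
              u₀ x * ((x - t) ^ N / (Nat.factorial N : ℝ) * iteratedDeriv (N + 1) (fun y : ℝ => φ y) t) := by
            rw [integral_indicator measurableSet_uIoc]
        _ = (if 0 ≤ x then (1:ℝ) else -1) * (u₀ x * ∫ t in Set.uIoc 0 x,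
              (x - t) ^ N / (Nat.factorial N : ℝ) * iteratedDeriv (N + 1) (fun y : ℝ => φ y) t) := by
            rw [integral_const_mul]
        _ = u₀ x * ((if (0:ℝ) ≤ x then (1:ℝ) else -1) • ∫ t in Set.uIoc 0 x,
              (x - t) ^ N / (Nat.factorial N : ℝ) * iteratedDeriv (N + 1) (fun y : ℝ => φ y) t) := by
            rw [smul_eq_mul]; ring
    have hfub : (∫ x : ℝ, u₀ x * (φ x - (∑ j ∈ Finset.range (N + 1), x ^ j / (Nat.factorial j : ℝ) * iteratedDeriv j (fun y : ℝ => φ y) 0)))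
        = ∫ t : ℝ, G t * iteratedDeriv (N + 1) (fun y : ℝ => φ y) t := by
      calc (∫ x : ℝ, u₀ x * (φ x - (∑ j ∈ Finset.range (N + 1), x ^ j / (Nat.factorial j : ℝ) * iteratedDeriv j (fun y : ℝ => φ y) 0)))
          = ∫ x : ℝ, ∫ t : ℝ, g x t * iteratedDeriv (N + 1) (fun y : ℝ => φ y) t := by
            congr 1; funext x; exact (hperx x).symm
        _ = ∫ t : ℝ, ∫ x : ℝ, g x t * iteratedDeriv (N + 1) (fun y : ℝ => φ y) t :=
            MeasureTheory.integral_integral_swap (f := fun x t => g x t * iteratedDeriv (N + 1) (fun y : ℝ => φ y) t) hHint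
        _ = ∫ t : ℝ, G t * iteratedDeriv (N + 1) (fun y : ℝ => φ y) t := by
            congr 1; funext t; exact integral_mul_const _ _
    rw [hsplit, hfub]
    congr 1
    · refine Finset.sum_congr rfl fun j hj => ?_
      have hsq : ((-1:ℝ) ^ j) * ((-1:ℝ) ^ j) = 1 := by
        rw [← pow_add]; exact Even.neg_one_pow ⟨j, rfl⟩
      have hring : ((-1:ℝ) ^ j / (Nat.factorial j : ℝ)) * (∫ x : ℝ, x ^ j * u₀ x) *
          ((-1:ℝ) ^ j * iteratedDeriv j (fun y : ℝ => φ y) 0) = (((-1:ℝ) ^ j) * ((-1:ℝ) ^ j)) *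
          (iteratedDeriv j (fun y : ℝ => φ y) 0 / (Nat.factorial j : ℝ) * ∫ x : ℝ, x ^ j * u₀ x) := by ring
      rw [hring, hsq, one_mul]
    · have hsq : ((-1:ℝ) ^ (N + 1)) * ((-1:ℝ) ^ (N + 1)) = 1 := by
        rw [← pow_add]; exact Even.neg_one_pow ⟨N + 1, rfl⟩
      have hfn : (fun x : ℝ => ((-1:ℝ) ^ (N + 1) * G x) * iteratedDeriv (N + 1) (fun y : ℝ => φ y) x)
          = fun x : ℝ => (-1:ℝ) ^ (N + 1) * (G x * iteratedDeriv (N + 1) (fun y : ℝ => φ y) x) := funext fun x => by ring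
      show (∫ t : ℝ, G t * iteratedDeriv (N + 1) (fun y : ℝ => φ y) t)
          = (-1:ℝ) ^ (N + 1) * ∫ x : ℝ, ((-1:ℝ) ^ (N + 1) * G x) * iteratedDeriv (N + 1) (fun y : ℝ => φ y) x
      rw [hfn, integral_const_mul, ← mul_assoc, hsq, one_mul]
end

section
/- Let m > 2 and Φ(ξ) = (|ξ|^m − iξ|ξ|^m)/(1+|ξ|^m). Then |∂_x S(t)K_m(x)| is bounded uniformly in x by C∫_ℝ |ξ| e^{−t|ξ|^m/(1+|ξ|^m)}/(1+|ξ|^m) dξ ≤ C(1+t)^{−2/m} + C e^{−t/2}; in particular ‖∂_x S(t)K_m‖_{L^∞(ℝ)} ≤ C(1+t)^{−2/m} for all t ≥ 0, where (S(t)K_m)^(ξ) = e^{−tΦ(ξ)}/(1+|ξ|^m). -/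
open MeasureTheory Real FourierTransform Complex

/-- Phase function `Φ(ξ) = (|ξ|^m − iξ|ξ|^m)/(1+|ξ|^m)`. -/
noncomputable def phaseFn (m : ℝ) (ξ : ℝ) : ℂ :=
  (((|ξ| ^ m : ℝ) : ℂ) - Complex.I * ξ * ((|ξ| ^ m : ℝ) : ℂ)) / (1 + ((|ξ| ^ m : ℝ) : ℂ))

/-- `S(t)K_m`, defined on the Fourier side by `e^{−tΦ(ξ)}/(1+|ξ|^m)`. -/
noncomputable def semigroupKernel (m t : ℝ) : ℝ → ℂ :=
  𝓕⁻ (fun ξ : ℝ => Complex.exp (-(t : ℂ) * phaseFn m ξ) / (1 + ((|ξ| ^ m : ℝ) : ℂ)))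

noncomputable def gk (m t : ℝ) (ξ : ℝ) : ℂ :=
  Complex.exp (-(t : ℂ) * phaseFn m ξ) / (1 + ((|ξ| ^ m : ℝ) : ℂ))

lemma gk_norm (m t : ℝ) (ξ : ℝ) :
    ‖gk m t ξ‖ = Real.exp (-(t * (|ξ| ^ m / (1 + |ξ| ^ m)))) / (1 + |ξ| ^ m) := by
  have ha : (0:ℝ) ≤ |ξ| ^ m := Real.rpow_nonneg (abs_nonneg ξ) m
  have hd : (0:ℝ) < 1 + |ξ| ^ m := by linarith
  have h1 : (1 + ((|ξ| ^ m : ℝ) : ℂ)) = (((1 + |ξ| ^ m : ℝ)) : ℂ) := by push_cast; ring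
  have hre : (-(t : ℂ) * phaseFn m ξ).re = -(t * (|ξ| ^ m / (1 + |ξ| ^ m))) := by
    rw [phaseFn, h1, mul_div_assoc']
    rw [Complex.div_ofReal_re]
    simp [Complex.mul_re, Complex.sub_re, Complex.mul_im]
    ring
  rw [gk, norm_div, h1, Complex.norm_exp, hre,
    Complex.norm_real, Real.norm_eq_abs, abs_of_pos hd]

lemma gk_continuous (m : ℝ) (hm : 0 ≤ m) (t : ℝ) : Continuous (gk m t) := by
  have hca : Continuous fun ξ : ℝ => (|ξ| ^ m : ℝ) :=
    continuous_abs.rpow_const (fun x => Or.inr hm)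
  have hcaC : Continuous fun ξ : ℝ => ((|ξ| ^ m : ℝ) : ℂ) :=
    Complex.continuous_ofReal.comp hca
  have hden : Continuous fun ξ : ℝ => (1 + ((|ξ| ^ m : ℝ) : ℂ)) := continuous_const.add hcaC
  have hne : ∀ ξ : ℝ, (1 + ((|ξ| ^ m : ℝ) : ℂ)) ≠ 0 := by
    intro ξ h
    have ha : (0:ℝ) ≤ |ξ| ^ m := Real.rpow_nonneg (abs_nonneg ξ) m
    have := congrArg Complex.re h
    simp at this
    linarith
  have hphase : Continuous (phaseFn m) := by
    apply Continuous.div _ hden hne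
    exact (hcaC.sub ((continuous_const.mul Complex.continuous_ofReal).mul hcaC))
  exact ((Complex.continuous_exp.comp (continuous_const.mul hphase)).div hden hne)

lemma exp_neg_le_rpow {q u : ℝ} (hq1 : 0 < q) (hq2 : q ≤ 2) (hu : 0 ≤ u) :
    Real.exp (-u) ≤ 2 * (1 + u) ^ (-q) := by
  have h1u : (0:ℝ) < 1 + u := by linarith
  have key : (1 + u) ^ (2:ℝ) ≤ 2 * Real.exp u := by
    rw [show (2:ℝ) = ((2:ℕ):ℝ) by norm_num, Real.rpow_natCast]
    have h3 : Real.exp u = Real.exp (u/3) ^ (3:ℕ) := by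
      rw [← Real.exp_nat_mul]; norm_num; ring_nf
    have h4 : u/3 + 1 ≤ Real.exp (u/3) := Real.add_one_le_exp _
    have h5 : (1 + u/3) ^ (3:ℕ) ≤ Real.exp (u/3) ^ (3:ℕ) := by
      apply pow_le_pow_left₀ (by linarith) (by linarith)
    rw [h3]
    nlinarith [sq_nonneg (u/3 - 1), sq_nonneg u]
  have h2 : (1 + u) ^ q ≤ (1 + u) ^ (2:ℝ) :=
    Real.rpow_le_rpow_of_exponent_le (by linarith) hq2
  have hbpos : (0:ℝ) < (1 + u) ^ q := Real.rpow_pos_of_pos h1u q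
  have hcomb : (1 + u) ^ q ≤ 2 * Real.exp u := h2.trans key
  rw [Real.exp_neg, Real.rpow_neg h1u.le]
  rw [inv_eq_one_div, inv_eq_one_div, mul_one_div]
  rw [div_le_div_iff₀ (Real.exp_pos u) hbpos]
  linarith

lemma one_add_rpow_le (m : ℝ) (hm : 0 ≤ m) {s : ℝ} (hs : 0 ≤ s) :
    (1 + s) ^ m ≤ 2 ^ m * (1 + s ^ m) := by
  have h1 : 1 + s ≤ 2 * max 1 s := by
    rcases le_total s 1 with h | h
    · have := le_max_left (1:ℝ) s; linarith
    · have := le_max_right (1:ℝ) s; linarith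
  have h2 : (1 + s) ^ m ≤ (2 * max 1 s) ^ m :=
    Real.rpow_le_rpow (by linarith) h1 hm
  have h3 : (2 * max 1 s) ^ m = 2 ^ m * (max 1 s) ^ m :=
    Real.mul_rpow (by norm_num) (le_max_of_le_left zero_le_one)
  have h4 : (max 1 s) ^ m ≤ 1 + s ^ m := by
    rcases le_total s 1 with h | h
    · rw [max_eq_left h, Real.one_rpow]
      have := Real.rpow_nonneg hs m; linarith
    · rw [max_eq_right h]
      have := Real.rpow_nonneg hs m; linarith [le_refl (s ^ m)]
    -- s^m ≤ 1 + s^m trivially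
  calc (1 + s) ^ m ≤ (2 * max 1 s) ^ m := h2
    _ = 2 ^ m * (max 1 s) ^ m := h3
    _ ≤ 2 ^ m * (1 + s ^ m) := by
        have : (0:ℝ) ≤ 2 ^ m := Real.rpow_nonneg (by norm_num) m
        nlinarith [h4]

lemma inv_one_add_rpow_le (m : ℝ) (hm : 0 ≤ m) {s : ℝ} (hs : 0 ≤ s) :
    (1 + s ^ m)⁻¹ ≤ 2 ^ m * (1 + s) ^ (-m) := by
  have ha : (0:ℝ) ≤ s ^ m := Real.rpow_nonneg hs m
  have hd : (0:ℝ) < 1 + s ^ m := by linarith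
  have hb : (0:ℝ) < (1 + s) ^ m := Real.rpow_pos_of_pos (by linarith) m
  rw [Real.rpow_neg (by linarith)]
  rw [← div_eq_mul_inv, le_div_iff₀ hb, inv_mul_eq_div, div_le_iff₀ hd]
  calc (1 + s) ^ m ≤ 2 ^ m * (1 + s ^ m) := one_add_rpow_le m hm hs
    _ = 2 ^ m * (1 + s ^ m) := rfl


lemma div_one_add_rpow_le (m : ℝ) (hm : 1 ≤ m) {s : ℝ} (hs : 0 ≤ s) :
    s / (1 + s ^ m) ≤ 2 ^ m * (1 + s) ^ (-(m - 1)) := by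
  have ha : (0:ℝ) ≤ s ^ m := Real.rpow_nonneg hs m
  have hd : (0:ℝ) < 1 + s ^ m := by linarith
  have h1s : (0:ℝ) < 1 + s := by linarith
  have hb : (0:ℝ) < (1 + s) ^ (m - 1) := Real.rpow_pos_of_pos h1s _
  rw [Real.rpow_neg h1s.le, ← div_eq_mul_inv, div_le_div_iff₀ hd hb]
  have hh : (1 + s) ^ (m - 1) * (1 + s) = (1 + s) ^ m := by
    have h := Real.rpow_add h1s (m - 1) 1
    rw [show m - 1 + 1 = m by ring, Real.rpow_one] at h
    exact h.symm
  have h2 : s * (1 + s) ^ (m - 1) ≤ (1 + s) ^ m := by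
    rw [← hh]; nlinarith
  calc s * (1 + s) ^ (m - 1) ≤ (1 + s) ^ m := h2
    _ ≤ 2 ^ m * (1 + s ^ m) := one_add_rpow_le m (by linarith) hs

lemma gk_integrable (m t : ℝ) (hm : 2 < m) (ht : 0 ≤ t) : Integrable (gk m t) := by
  have hmaj : Integrable (fun ξ : ℝ => 2 ^ m * (1 + ‖ξ‖) ^ (-m)) :=
    (integrable_one_add_norm (by simp; linarith)).const_mul _
  refine hmaj.mono' ((gk_continuous m (by linarith) t).aestronglyMeasurable) ?_
  filter_upwards with ξ
  rw [gk_norm]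
  have ha : (0:ℝ) ≤ |ξ| ^ m := Real.rpow_nonneg (abs_nonneg ξ) m
  have hd : (0:ℝ) < 1 + |ξ| ^ m := by linarith
  have hr : (0:ℝ) ≤ |ξ| ^ m / (1 + |ξ| ^ m) := div_nonneg ha hd.le
  have hexp : Real.exp (-(t * (|ξ| ^ m / (1 + |ξ| ^ m)))) ≤ 1 := by
    apply Real.exp_le_one_iff.mpr
    nlinarith
  calc Real.exp (-(t * (|ξ| ^ m / (1 + |ξ| ^ m)))) / (1 + |ξ| ^ m)
      ≤ 1 / (1 + |ξ| ^ m) := by gcongr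
    _ = (1 + |ξ| ^ m)⁻¹ := one_div _
    _ ≤ 2 ^ m * (1 + |ξ|) ^ (-m) := inv_one_add_rpow_le m (by linarith) (abs_nonneg ξ)
    _ = 2 ^ m * (1 + ‖ξ‖) ^ (-m) := by norm_num

lemma gk_smul_norm (m t : ℝ) (ξ : ℝ) :
    ‖ξ • gk m t ξ‖ = |ξ| * (Real.exp (-(t * (|ξ| ^ m / (1 + |ξ| ^ m)))) / (1 + |ξ| ^ m)) := by
  rw [norm_smul, gk_norm, Real.norm_eq_abs]

lemma gk_smul_integrable (m t : ℝ) (hm : 2 < m) (ht : 0 ≤ t) :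
    Integrable (fun ξ : ℝ => ξ • gk m t ξ) := by
  have hmaj : Integrable (fun ξ : ℝ => 2 ^ m * (1 + ‖ξ‖) ^ (-(m - 1))) :=
    (integrable_one_add_norm (by simp; linarith)).const_mul _
  have hcont : Continuous (fun ξ : ℝ => ξ • gk m t ξ) :=
    (continuous_id.smul (gk_continuous m (by linarith) t))
  refine hmaj.mono' hcont.aestronglyMeasurable ?_
  filter_upwards with ξ
  rw [gk_smul_norm]
  have ha : (0:ℝ) ≤ |ξ| ^ m := Real.rpow_nonneg (abs_nonneg ξ) m
  have hd : (0:ℝ) < 1 + |ξ| ^ m := by linarith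
  have hr : (0:ℝ) ≤ |ξ| ^ m / (1 + |ξ| ^ m) := div_nonneg ha hd.le
  have hexp : Real.exp (-(t * (|ξ| ^ m / (1 + |ξ| ^ m)))) ≤ 1 := by
    apply Real.exp_le_one_iff.mpr; nlinarith
  have hexp0 : (0:ℝ) < Real.exp (-(t * (|ξ| ^ m / (1 + |ξ| ^ m)))) := Real.exp_pos _
  calc |ξ| * (Real.exp (-(t * (|ξ| ^ m / (1 + |ξ| ^ m)))) / (1 + |ξ| ^ m))
      ≤ |ξ| * (1 / (1 + |ξ| ^ m)) := by gcongr
    _ = |ξ| / (1 + |ξ| ^ m) := by ring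
    _ ≤ 2 ^ m * (1 + |ξ|) ^ (-(m - 1)) := div_one_add_rpow_le m (by linarith) (abs_nonneg ξ)
    _ = 2 ^ m * (1 + ‖ξ‖) ^ (-(m - 1)) := by norm_num

lemma deriv_bound (m t : ℝ) (hm : 2 < m) (ht : 0 ≤ t) (x : ℝ) :
    ‖deriv (semigroupKernel m t) x‖ ≤ (2 * π) * ∫ ξ : ℝ, ‖ξ • gk m t ξ‖ := by
  have hf := gk_integrable m t hm ht
  have hf' := gk_smul_integrable m t hm ht
  have hker : semigroupKernel m t = fun x => 𝓕 (gk m t) (-x) := by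
    funext y
    exact Real.fourierInv_eq_fourier_neg _ _
  have hD := Real.hasDerivAt_fourier hf hf' (-x)
  have hcomp : HasDerivAt (semigroupKernel m t)
      ((-1 : ℝ) • (𝓕 (fun ξ : ℝ => (-2 * π * Complex.I * ξ) • gk m t ξ) (-x))) x := by
    rw [hker]
    exact hD.scomp x (hasDerivAt_neg x)
  rw [hcomp.deriv]
  rw [norm_smul]
  simp only [norm_neg, norm_one, one_mul, Real.norm_eq_abs, abs_neg, abs_one]
  have hb := VectorFourier.norm_fourierIntegral_le_integral_norm Real.fourierChar volume
    (innerₗ ℝ) (fun ξ : ℝ => (-2 * π * Complex.I * ξ) • gk m t ξ) (-x)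
  refine hb.trans ?_
  have hpt : ∀ ξ : ℝ, ‖(-2 * ↑π * Complex.I * (ξ:ℂ)) • gk m t ξ‖ = (2 * π) * ‖ξ • gk m t ξ‖ := by
    intro ξ
    rw [norm_smul, norm_smul, Real.norm_eq_abs]
    have hc : ‖(-2 * ↑π * Complex.I * (ξ:ℂ))‖ = 2 * π * |ξ| := by
      simp [norm_mul, Complex.norm_real, abs_of_pos Real.pi_pos]
    rw [hc]; ring
  calc ∫ ξ : ℝ, ‖(-2 * ↑π * Complex.I * (ξ:ℂ)) • gk m t ξ‖
      = ∫ ξ : ℝ, (2 * π) * ‖ξ • gk m t ξ‖ := by simp_rw [hpt]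
    _ = (2 * π) * ∫ ξ : ℝ, ‖ξ • gk m t ξ‖ := MeasureTheory.integral_const_mul _ _
    _ ≤ (2 * π) * ∫ ξ : ℝ, ‖ξ • gk m t ξ‖ := le_refl _

set_option maxHeartbeats 1000000 in
lemma integral_bound (m t : ℝ) (hm : 2 < m) (ht : 0 ≤ t) :
    ∫ ξ : ℝ, ‖ξ • gk m t ξ‖ ≤ (2 * (1/2 + 8 + 8/(m-2))) * (1 + t) ^ (-(2/m)) := by
  have hm0 : (0:ℝ) ≤ m := by linarith
  have hmne : m ≠ 0 := by linarith
  have h1t : (0:ℝ) < 1 + t := by linarith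
  have h1t1 : (1:ℝ) ≤ 1 + t := by linarith
  set P : ℝ := (1 + t) ^ (-(3/m)) with hP
  set ξ0 : ℝ := (1 + t) ^ (-(1/m)) with hξ0
  have hPpos : 0 < P := Real.rpow_pos_of_pos h1t _
  have hξ0pos : 0 < ξ0 := Real.rpow_pos_of_pos h1t _
  have hξ0le1 : ξ0 ≤ 1 :=
    Real.rpow_le_one_of_one_le_of_nonpos h1t1 (neg_nonpos.mpr (by positivity))
  set G : ℝ → ℝ := fun s => s * (Real.exp (-(t * (s ^ m / (1 + s ^ m)))) / (1 + s ^ m)) with hG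
  -- exponent bound used in regions B and C
  have hq2 : 3/m ≤ 2 := by rw [div_le_iff₀ (by linarith : (0:ℝ) < m)]; linarith
  have h2pow : (2:ℝ) ^ (3/m) ≤ 4 := by
    have h := Real.rpow_le_rpow_of_exponent_le (one_le_two) hq2
    rwa [show ((2:ℝ) ^ (2:ℝ)) = 4 by
      rw [show (2:ℝ) = ((2:ℕ):ℝ) by norm_num, Real.rpow_natCast]; norm_num] at h
  -- region A bound
  have hP1 : ∀ s ∈ Set.Ioc (0:ℝ) ξ0, G s ≤ s := by
    intro s hs
    have hs0 : (0:ℝ) < s := hs.1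
    have hA0 : (0:ℝ) < s ^ m := Real.rpow_pos_of_pos hs0 m
    have hrge : (0:ℝ) ≤ s ^ m / (1 + s ^ m) := by positivity
    have hE1 : Real.exp (-(t * (s ^ m / (1 + s ^ m)))) ≤ 1 := by
      apply Real.exp_le_one_iff.mpr; nlinarith
    have : Real.exp (-(t * (s ^ m / (1 + s ^ m)))) / (1 + s ^ m) ≤ 1 := by
      rw [div_le_one (by linarith)]; linarith
    calc G s ≤ s * 1 := mul_le_mul_of_nonneg_left this hs0.le
      _ = s := mul_one s
  -- region B bound
  have hP2 : ∀ s ∈ Set.Ioc ξ0 1, G s ≤ 8 * P * s ^ (-(2:ℝ)) := by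
    intro s hs
    have hs0 : (0:ℝ) < s := lt_trans hξ0pos hs.1
    have hs1 : s ≤ 1 := hs.2
    have hA0 : (0:ℝ) < s ^ m := Real.rpow_pos_of_pos hs0 m
    have hA1 : s ^ m ≤ 1 := Real.rpow_le_one hs0.le hs1 hm0
    have hr : s ^ m / 2 ≤ s ^ m / (1 + s ^ m) := by
      apply div_le_div_of_nonneg_left hA0.le (by linarith) (by linarith)
    have hE : Real.exp (-(t * (s ^ m / (1 + s ^ m)))) ≤ Real.exp (-(t * (s ^ m / 2))) := by
      apply Real.exp_le_exp.mpr; nlinarith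
    have hE2 : Real.exp (-(t * (s ^ m / 2))) ≤ 2 * (1 + t * (s ^ m / 2)) ^ (-(3/m)) :=
      exp_neg_le_rpow (by positivity) hq2 (by positivity)
    have hbase : (s ^ m / 2) * (1 + t) ≤ 1 + t * (s ^ m / 2) := by nlinarith
    have hE3 : (1 + t * (s ^ m / 2)) ^ (-(3/m)) ≤ ((s ^ m / 2) * (1 + t)) ^ (-(3/m)) :=
      Real.rpow_le_rpow_of_nonpos (by positivity) hbase (neg_nonpos.mpr (by positivity))
    have hsplit : ((s ^ m / 2) * (1 + t)) ^ (-(3/m))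
        = (s ^ m / 2) ^ (-(3/m)) * P := Real.mul_rpow (by positivity) (by positivity)
    have hA2 : (s ^ m / 2) ^ (-(3/m)) = 2 ^ (3/m) * (s ^ m) ^ (-(3/m)) := by
      rw [Real.div_rpow hA0.le (by norm_num), Real.rpow_neg (by norm_num : (0:ℝ) ≤ 2),
        div_eq_mul_inv, inv_inv]
      ring
    have hA3 : (s ^ m) ^ (-(3/m)) = s ^ (-(3:ℝ)) := by
      rw [← Real.rpow_mul hs0.le]
      congr 1
      field_simp
    have hEfin : Real.exp (-(t * (s ^ m / (1 + s ^ m)))) ≤ 8 * P * s ^ (-(3:ℝ)) := by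
      have hs3 : (0:ℝ) ≤ s ^ (-(3:ℝ)) := Real.rpow_nonneg hs0.le _
      calc Real.exp (-(t * (s ^ m / (1 + s ^ m))))
          ≤ 2 * (1 + t * (s ^ m / 2)) ^ (-(3/m)) := hE.trans hE2
        _ ≤ 2 * ((s ^ m / 2) * (1 + t)) ^ (-(3/m)) := by linarith
        _ = 2 * ((2:ℝ) ^ (3/m) * s ^ (-(3:ℝ)) * P) := by rw [hsplit, hA2, hA3]
        _ ≤ 2 * (4 * s ^ (-(3:ℝ)) * P) := by
            nlinarith [mul_nonneg (sub_nonneg.mpr h2pow) (mul_nonneg hs3 hPpos.le)]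
        _ = 8 * P * s ^ (-(3:ℝ)) := by ring
    have hdiv : Real.exp (-(t * (s ^ m / (1 + s ^ m)))) / (1 + s ^ m)
        ≤ Real.exp (-(t * (s ^ m / (1 + s ^ m)))) :=
      div_le_self (Real.exp_nonneg _) (by linarith)
    have hss : s * s ^ (-(3:ℝ)) = s ^ (-(2:ℝ)) := by
      nth_rewrite 1 [← Real.rpow_one s]
      rw [← Real.rpow_add hs0]; norm_num
    calc G s ≤ s * Real.exp (-(t * (s ^ m / (1 + s ^ m)))) :=
          mul_le_mul_of_nonneg_left hdiv hs0.le
      _ ≤ s * (8 * P * s ^ (-(3:ℝ))) := mul_le_mul_of_nonneg_left hEfin hs0.le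
      _ = 8 * P * (s * s ^ (-(3:ℝ))) := by ring
      _ = 8 * P * s ^ (-(2:ℝ)) := by rw [hss]
  -- region C bound
  have hP3 : ∀ s ∈ Set.Ioi (1:ℝ), G s ≤ 8 * P * s ^ (1 - m) := by
    intro s hs
    have hs1 : (1:ℝ) < s := hs
    have hs0 : (0:ℝ) < s := by linarith
    have hA0 : (0:ℝ) < s ^ m := Real.rpow_pos_of_pos hs0 m
    have hA1 : (1:ℝ) ≤ s ^ m := by
      calc (1:ℝ) = 1 ^ m := (Real.one_rpow m).symm
        _ ≤ s ^ m := Real.rpow_le_rpow zero_le_one hs1.le hm0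
    have hr : (1:ℝ)/2 ≤ s ^ m / (1 + s ^ m) := by
      rw [div_le_div_iff₀ two_pos (by linarith)]; linarith
    have hE : Real.exp (-(t * (s ^ m / (1 + s ^ m)))) ≤ Real.exp (-(t * (1/2))) := by
      apply Real.exp_le_exp.mpr; nlinarith
    have hE2 : Real.exp (-(t * (1/2))) ≤ 2 * (1 + t * (1/2)) ^ (-(3/m)) :=
      exp_neg_le_rpow (by positivity) hq2 (by positivity)
    have hbase : ((1:ℝ) / 2) * (1 + t) ≤ 1 + t * (1/2) := by nlinarith
    have hE3 : (1 + t * (1/2)) ^ (-(3/m)) ≤ (((1:ℝ)/2) * (1 + t)) ^ (-(3/m)) :=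
      Real.rpow_le_rpow_of_nonpos (by positivity) hbase (neg_nonpos.mpr (by positivity))
    have hsplit : (((1:ℝ)/2) * (1 + t)) ^ (-(3/m)) = ((1:ℝ)/2) ^ (-(3/m)) * P :=
      Real.mul_rpow (by positivity) (by positivity)
    have hhalf : ((1:ℝ)/2) ^ (-(3/m)) = 2 ^ (3/m) := by
      rw [Real.div_rpow (by norm_num) (by norm_num : (0:ℝ) ≤ 2), Real.rpow_neg
        (by norm_num : (0:ℝ) ≤ 2), Real.rpow_neg (by norm_num : (0:ℝ) ≤ 1), Real.one_rpow,
        div_eq_mul_inv, inv_inv]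
      ring
    have hEfin : Real.exp (-(t * (s ^ m / (1 + s ^ m)))) ≤ 8 * P := by
      calc Real.exp (-(t * (s ^ m / (1 + s ^ m))))
          ≤ 2 * (1 + t * (1/2)) ^ (-(3/m)) := hE.trans hE2
        _ ≤ 2 * (((1:ℝ)/2) * (1 + t)) ^ (-(3/m)) := by linarith
        _ = 2 * (2 ^ (3/m) * P) := by rw [hsplit, hhalf]
        _ ≤ 2 * (4 * P) := by
            nlinarith [mul_nonneg (sub_nonneg.mpr h2pow) hPpos.le]
        _ = 8 * P := by ring
    have hfrac : s / (1 + s ^ m) ≤ s ^ (1 - m) := by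
      have h1 : s / (1 + s ^ m) ≤ s / s ^ m := by
        apply div_le_div_of_nonneg_left hs0.le hA0 (by linarith)
      have h2 : s / s ^ m = s ^ (1 - m) := by
        rw [Real.rpow_sub hs0, Real.rpow_one]
      linarith
    have hGrw : G s = (s / (1 + s ^ m)) * Real.exp (-(t * (s ^ m / (1 + s ^ m)))) := by
      rw [hG]; ring
    calc G s = (s / (1 + s ^ m)) * Real.exp (-(t * (s ^ m / (1 + s ^ m)))) := hGrw
      _ ≤ s ^ (1 - m) * (8 * P) := by
          apply mul_le_mul hfrac hEfin (Real.exp_nonneg _) (Real.rpow_nonneg hs0.le _)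
      _ = 8 * P * s ^ (1 - m) := by ring
  -- integrability
  have hInt : Integrable (fun ξ : ℝ => G |ξ|) := by
    refine ((gk_smul_integrable m t hm ht).norm).congr (Filter.Eventually.of_forall fun ξ => ?_)
    show ‖ξ • gk m t ξ‖ = G |ξ|
    rw [gk_smul_norm]
  have hIntOn : IntegrableOn G (Set.Ioi (0:ℝ)) := by
    refine (hInt.integrableOn).congr_fun (fun s hs => ?_) measurableSet_Ioi
    show G |s| = G s
    rw [abs_of_pos (show (0:ℝ) < s from hs)]
  -- rewrite as integral over Ioi 0
  have hIeq : ∫ ξ : ℝ, ‖ξ • gk m t ξ‖ = 2 * ∫ s in Set.Ioi (0:ℝ), G s := by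
    have h1 : ∫ ξ : ℝ, ‖ξ • gk m t ξ‖ = ∫ ξ : ℝ, G |ξ| := by
      congr 1; funext ξ; rw [gk_smul_norm]
    rw [h1, integral_comp_abs (f := G)]
  -- splitting
  have hsplit1 : ∫ s in Set.Ioi (0:ℝ), G s
      = (∫ s in Set.Ioc 0 ξ0, G s) + ∫ s in Set.Ioi ξ0, G s := by
    rw [← setIntegral_union (Set.Ioc_disjoint_Ioi le_rfl) measurableSet_Ioi
      (hIntOn.mono_set Set.Ioc_subset_Ioi_self) (hIntOn.mono_set (Set.Ioi_subset_Ioi hξ0pos.le)),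
      Set.Ioc_union_Ioi_eq_Ioi hξ0pos.le]
  have hsplit2 : ∫ s in Set.Ioi ξ0, G s
      = (∫ s in Set.Ioc ξ0 1, G s) + ∫ s in Set.Ioi (1:ℝ), G s := by
    rw [← setIntegral_union (Set.Ioc_disjoint_Ioi le_rfl) measurableSet_Ioi
      ((hIntOn.mono_set (Set.Ioi_subset_Ioi hξ0pos.le)).mono_set Set.Ioc_subset_Ioi_self)
      (hIntOn.mono_set (Set.Ioi_subset_Ioi (by linarith))),
      Set.Ioc_union_Ioi_eq_Ioi hξ0le1]
  -- bounds on the three pieces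
  have hb1 : (∫ s in Set.Ioc (0:ℝ) ξ0, G s) ≤ ξ0 ^ 2 / 2 := by
    have hmono := setIntegral_mono_on (hIntOn.mono_set Set.Ioc_subset_Ioi_self)
      (intervalIntegral.intervalIntegrable_id (μ := volume) (a := 0) (b := ξ0)).1
      measurableSet_Ioc hP1
    have hval : (∫ s in Set.Ioc (0:ℝ) ξ0, s) = ξ0 ^ 2 / 2 := by
      rw [← intervalIntegral.integral_of_le hξ0pos.le, integral_id]
      norm_num
    linarith [hmono, hval.le]
  have hb2 : (∫ s in Set.Ioc ξ0 1, G s) ≤ 8 * P * ξ0⁻¹ := by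
    have h0notin : (0:ℝ) ∉ Set.uIcc ξ0 1 := by
      rw [Set.uIcc_of_le hξ0le1]
      intro h
      exact absurd h.1 (by linarith)
    have hintmaj : IntegrableOn (fun s : ℝ => 8 * P * s ^ (-(2:ℝ))) (Set.Ioc ξ0 1) :=
      ((intervalIntegral.intervalIntegrable_rpow (Or.inr h0notin)).1).const_mul _
    have hmono := setIntegral_mono_on
      ((hIntOn.mono_set (Set.Ioi_subset_Ioi hξ0pos.le)).mono_set Set.Ioc_subset_Ioi_self)
      hintmaj measurableSet_Ioc hP2
    have hval : (∫ s in Set.Ioc ξ0 1, 8 * P * s ^ (-(2:ℝ))) = 8 * P * (ξ0⁻¹ - 1) := by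
      rw [← intervalIntegral.integral_of_le hξ0le1, intervalIntegral.integral_const_mul,
        integral_rpow (Or.inr ⟨by norm_num, h0notin⟩)]
      rw [show (-(2:ℝ) + 1) = (-1 : ℝ) by norm_num, Real.one_rpow, Real.rpow_neg_one]
      ring
    have : 8 * P * (ξ0⁻¹ - 1) ≤ 8 * P * ξ0⁻¹ := by nlinarith [hPpos.le]
    linarith [hmono, hval.le]
  have hb3 : (∫ s in Set.Ioi (1:ℝ), G s) ≤ 8 * P * (1 / (m - 2)) := by
    have hintmaj : IntegrableOn (fun s : ℝ => 8 * P * s ^ (1 - m)) (Set.Ioi (1:ℝ)) :=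
      (integrableOn_Ioi_rpow_of_lt (by linarith) one_pos).const_mul _
    have hmono := setIntegral_mono_on (hIntOn.mono_set (Set.Ioi_subset_Ioi (by linarith)))
      hintmaj measurableSet_Ioi hP3
    have hval : (∫ s in Set.Ioi (1:ℝ), 8 * P * s ^ (1 - m)) = 8 * P * (1 / (m - 2)) := by
      rw [MeasureTheory.integral_const_mul, integral_Ioi_rpow_of_lt (by linarith) one_pos,
        Real.one_rpow, show (1:ℝ) - m + 1 = -(m-2) by ring, neg_div_neg_eq]
    linarith [hmono, hval.le]
  -- rpow arithmetic
  have e1 : ξ0 ^ 2 = (1 + t) ^ (-(2/m)) := by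
    rw [hξ0, ← Real.rpow_natCast ((1 + t) ^ (-(1/m))) 2, ← Real.rpow_mul h1t.le]
    congr 1
    push_cast
    ring
  have e2 : P * ξ0⁻¹ = (1 + t) ^ (-(2/m)) := by
    have hinv : ξ0⁻¹ = (1 + t) ^ (1/m) := by
      rw [hξ0, Real.rpow_neg h1t.le, inv_inv]
    rw [hinv, hP, ← Real.rpow_add h1t]
    congr 1
    ring
  have e3 : P ≤ (1 + t) ^ (-(2/m)) := by
    apply Real.rpow_le_rpow_of_exponent_le h1t1
    have hmpos : (0:ℝ) < m := by linarith
    have h23 : (2:ℝ)/m ≤ 3/m := by gcongr <;> norm_num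
    linarith
  set Q : ℝ := (1 + t) ^ (-(2/m)) with hQ
  have hQpos : 0 < Q := Real.rpow_pos_of_pos h1t _
  have hb1' : (∫ s in Set.Ioc (0:ℝ) ξ0, G s) ≤ Q / 2 := by rw [← e1]; exact hb1
  have hb2' : (∫ s in Set.Ioc ξ0 1, G s) ≤ 8 * Q := by
    calc (∫ s in Set.Ioc ξ0 1, G s) ≤ 8 * P * ξ0⁻¹ := hb2
      _ = 8 * (P * ξ0⁻¹) := by ring
      _ = 8 * Q := by rw [e2]
  have hb3' : (∫ s in Set.Ioi (1:ℝ), G s) ≤ 8 / (m - 2) * Q := by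
    have hm2 : (0:ℝ) < m - 2 := by linarith
    calc (∫ s in Set.Ioi (1:ℝ), G s) ≤ 8 * P * (1 / (m - 2)) := hb3
      _ = 8 / (m - 2) * P := by ring
      _ ≤ 8 / (m - 2) * Q := by
          apply mul_le_mul_of_nonneg_left e3 (by positivity)
  rw [hIeq, hsplit1, hsplit2]
  have hm2 : (0:ℝ) < m - 2 := by linarith
  have hfin : 2 * (1/2 + 8 + 8/(m-2)) * Q
      = 2 * (Q / 2 + (8 * Q + 8 / (m - 2) * Q)) := by ring
  rw [hfin]
  linarith

theorem semigroupKernel_deriv_sup_decay (m : ℝ) (hm : 2 < m) :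
    ∃ C > 0, ∀ t : ℝ, 0 ≤ t →
      eLpNorm (deriv (semigroupKernel m t)) ⊤ volume ≤
        ENNReal.ofReal (C * (1 + t) ^ (-(2 / m))) := by
  have hm2 : (0:ℝ) < m - 2 := by linarith
  have h8 : (0:ℝ) < 8 / (m - 2) := div_pos (by norm_num) hm2
  have hCpos : (0:ℝ) < (2 * π) * (2 * (1/2 + 8 + 8/(m-2))) := by
    have := Real.pi_pos
    nlinarith
  refine ⟨(2 * π) * (2 * (1/2 + 8 + 8/(m-2))), hCpos, fun t ht => ?_⟩
  rw [eLpNorm_exponent_top]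
  apply eLpNormEssSup_le_of_ae_bound
  filter_upwards with x
  calc ‖deriv (semigroupKernel m t) x‖
      ≤ (2 * π) * ∫ ξ : ℝ, ‖ξ • gk m t ξ‖ := deriv_bound m t hm ht x
    _ ≤ (2 * π) * ((2 * (1/2 + 8 + 8/(m-2))) * (1 + t) ^ (-(2 / m))) := by
        apply mul_le_mul_of_nonneg_left (integral_bound m t hm ht) (by positivity)
    _ = (2 * π) * (2 * (1/2 + 8 + 8/(m-2))) * (1 + t) ^ (-(2 / m)) := by ring
end
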